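/- Let k ≥ 1 and n ≥ 2 be integers and let L be a k×k integer matrix all of whose row sums and column sums are zero. Let L̃ₙ be the (k+n−1)×(k+n−1) integer block matrix [[nIₖ + L, −J], [−J, (n+k)Iₙ₋₁ − J]], where each J denotes a block of all 1s of the appropriate dimensions. Then there exist unimodular integer matrices U and V of size (k+n−1) such that U · L̃ₙ · V equals the block-diagonal matrix with diagonal blocks nIₖ + L + Jₖ, (n+k)Iₙ₋₂, and the 1×1 block (1), where Jₖ is the k×k all-ones matrix. -/

import Mathlib

namespace ConeAux
open Matrix

variable {ι : Type*} [Fintype ι] [DecidableEq ι]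

/-- indicator vector of `s` -/
def wvec (s : ι) : ι → ℤ := fun p => if p = s then 1 else 0

/-- complement indicator -/
def uvec (s : ι) : ι → ℤ := fun p => if p = s then 0 else 1

lemma uvec_add_wvec (s : ι) (p : ι) : uvec s p + wvec s p = 1 := by
  simp [uvec, wvec]; split <;> ring

lemma wvec_dot_uvec (s : ι) : wvec s ⬝ᵥ uvec s = 0 := by
  apply Finset.sum_eq_zero; intro p _
  by_cases h : p = s <;> simp [uvec, wvec, h]

lemma uvec_dot_wvec (s : ι) : uvec s ⬝ᵥ wvec s = 0 := by
  apply Finset.sum_eq_zero; intro p _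
  by_cases h : p = s <;> simp [uvec, wvec, h]

lemma wvec_dot_wvec (s : ι) : wvec s ⬝ᵥ wvec s = 1 := by
  have : ∀ p, wvec s p * wvec s p = if p = s then 1 else 0 := by
    intro p; by_cases h : p = s <;> simp [wvec, h]
  simp only [dotProduct, this, Finset.sum_ite_eq', Finset.mem_univ, if_true]

lemma mul_vecMulVec (M : Matrix ι ι ℤ) (a b : ι → ℤ) :
    M * Matrix.vecMulVec a b = Matrix.vecMulVec (M *ᵥ a) b := by
  ext i j
  simp only [Matrix.mul_apply, Matrix.vecMulVec_apply, Matrix.mulVec, dotProduct,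
    Finset.sum_mul]
  exact Finset.sum_congr rfl fun q _ => by ring

lemma vecMulVec_mul (M : Matrix ι ι ℤ) (a b : ι → ℤ) :
    Matrix.vecMulVec a b * M = Matrix.vecMulVec a (b ᵥ* M) := by
  ext i j
  simp only [Matrix.mul_apply, Matrix.vecMulVec_apply, Matrix.vecMul, dotProduct,
    Finset.mul_sum]
  exact Finset.sum_congr rfl fun q _ => by ring

lemma vecMulVec_mul_vecMulVec (a b c d : ι → ℤ) :
    Matrix.vecMulVec a b * Matrix.vecMulVec c d = (b ⬝ᵥ c) • Matrix.vecMulVec a d := by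
  ext i j
  simp only [Matrix.mul_apply, Matrix.vecMulVec_apply, Matrix.smul_apply, dotProduct,
    Finset.sum_mul, smul_eq_mul]
  exact Finset.sum_congr rfl fun q _ => by ring

lemma wvec_vecMul (s : ι) (M : Matrix ι ι ℤ) : wvec s ᵥ* M = fun c => M s c := by
  funext c
  simp only [Matrix.vecMul, dotProduct, wvec, ite_mul, one_mul, zero_mul,
    Finset.sum_ite_eq', Finset.mem_univ, if_true]

lemma mulVec_wvec (s : ι) (M : Matrix ι ι ℤ) : M *ᵥ wvec s = fun r => M r s := by
  funext r
  simp only [Matrix.mulVec, dotProduct, wvec, mul_ite, mul_one, mul_zero,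
    Finset.sum_ite_eq', Finset.mem_univ, if_true]

lemma mulVec_uvec (s : ι) (M : Matrix ι ι ℤ) (hsum : ∀ p, ∑ q, M p q = 1) :
    M *ᵥ uvec s = fun r => 1 - M r s := by
  funext r
  have h1 : ∀ q, M r q * uvec s q = M r q - M r q * wvec s q := by
    intro q; by_cases h : q = s <;> simp [uvec, wvec, h]
  simp only [Matrix.mulVec, dotProduct, h1, Finset.sum_sub_distrib, hsum r]
  simp only [wvec, mul_ite, mul_one, mul_zero, Finset.sum_ite_eq', Finset.mem_univ, if_true]

lemma det_one_sub_uw (s : ι) : (1 - Matrix.vecMulVec (uvec s) (wvec s)).det = 1 := by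
  have h : (1 : Matrix ι ι ℤ) - Matrix.vecMulVec (uvec s) (wvec s)
      = 1 + Matrix.replicateCol Unit (-(uvec s)) * Matrix.replicateRow Unit (wvec s) := by
    rw [← Matrix.vecMulVec_eq Unit]
    ext i j; simp [Matrix.vecMulVec_apply]; ring
  rw [h, Matrix.det_one_add_replicateCol_mul_replicateRow, dotProduct_neg, wvec_dot_uvec s]
  norm_num

lemma det_one_add_uw (s : ι) : (1 + Matrix.vecMulVec (uvec s) (wvec s)).det = 1 := by
  rw [Matrix.vecMulVec_eq Unit, Matrix.det_one_add_replicateCol_mul_replicateRow, wvec_dot_uvec]; norm_num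

lemma det_one_add_wu (s : ι) : (1 + Matrix.vecMulVec (wvec s) (uvec s)).det = 1 := by
  rw [Matrix.vecMulVec_eq Unit, Matrix.det_one_add_replicateCol_mul_replicateRow, uvec_dot_wvec]; norm_num

/-- the main entrywise formula -/
lemma entry_formula (M : Matrix ι ι ℤ) (s : ι) (hsum : ∀ p, ∑ q, M p q = 1) :
    (1 - Matrix.vecMulVec (uvec s) (wvec s)) * M *
      ((1 + Matrix.vecMulVec (uvec s) (wvec s)) * (1 + Matrix.vecMulVec (wvec s) (uvec s)))
    = Matrix.of fun r c =>
        (M r c + (1 - M r s) * wvec s c + M r s * uvec s c + (1 - M r s) * uvec s c)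
        - uvec s r * ((M s c + (1 - M s s) * wvec s c + M s s * uvec s c
            + (1 - M s s) * uvec s c)) := by
  have hV : (1 + Matrix.vecMulVec (uvec s) (wvec s)) * (1 + Matrix.vecMulVec (wvec s) (uvec s))
      = 1 + (Matrix.vecMulVec (uvec s) (wvec s) + Matrix.vecMulVec (wvec s) (uvec s)
          + Matrix.vecMulVec (uvec s) (uvec s)) := by
    rw [add_mul, one_mul, mul_add, mul_one, vecMulVec_mul_vecMulVec, wvec_dot_wvec, one_smul]
    abel
  set X : Matrix ι ι ℤ := Matrix.of fun r c =>
      M r c + (1 - M r s) * wvec s c + M r s * uvec s c + (1 - M r s) * uvec s c with hX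
  have hMX : M * ((1 + Matrix.vecMulVec (uvec s) (wvec s))
      * (1 + Matrix.vecMulVec (wvec s) (uvec s))) = X := by
    rw [hV, mul_add, mul_one, mul_add, mul_add, mul_vecMulVec, mul_vecMulVec, mul_vecMulVec,
      mulVec_uvec s M hsum, mulVec_wvec]
    ext r c
    simp [hX, Matrix.vecMulVec_apply]
    ring
  rw [Matrix.mul_assoc, hMX, sub_mul, one_mul, vecMulVec_mul, wvec_vecMul]
  ext r c
  simp [hX, Matrix.vecMulVec_apply]

end ConeAux

/-- Let `k ≥ 1`, `n ≥ 2`, and let `L` be a `k × k` integer matrix all of whose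
row sums and column sums are zero.  Let `L̃ₙ` be the `(k+n-1) × (k+n-1)` block matrix
`[[nIₖ + L, -J], [-J, (n+k)Iₙ₋₁ - J]]`.  Then there exist unimodular integer matrices `U`, `V`
with `U * L̃ₙ * V` equal to the block-diagonal matrix with diagonal blocks `nIₖ + L + Jₖ`,
`(n+k)Iₙ₋₂` and the `1 × 1` block `(1)`. -/
theorem cone_reduced_laplacian_diagonalization
    (k n : ℕ) (hk : 1 ≤ k) (hn : 2 ≤ n)
    (L : Matrix (Fin k) (Fin k) ℤ)
    (hrow : ∀ i, ∑ j, L i j = 0) (hcol : ∀ j, ∑ i, L i j = 0)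
    (Ln : Matrix (Fin k ⊕ Fin (n - 1)) (Fin k ⊕ Fin (n - 1)) ℤ)
    (hLn : Ln = Matrix.fromBlocks
      ((n : ℤ) • 1 + L) (-(Matrix.of fun _ _ => 1))
      (-(Matrix.of fun _ _ => 1)) (((n + k : ℕ) : ℤ) • 1 - Matrix.of fun _ _ => 1)) :
    ∃ U V : Matrix (Fin k ⊕ Fin (n - 1)) (Fin k ⊕ Fin (n - 1)) ℤ,
      IsUnit U.det ∧ IsUnit V.det ∧
      U * Ln * V =
        Matrix.submatrix
          (Matrix.fromBlocks
            ((n : ℤ) • 1 + L + Matrix.of fun _ _ => 1) 0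
            0 (Matrix.fromBlocks (((n + k : ℕ) : ℤ) • 1) 0
                0 (1 : Matrix (Fin 1) (Fin 1) ℤ)))
          (Equiv.sumCongr (Equiv.refl (Fin k))
            ((finCongr (by omega : n - 1 = (n - 2) + 1)).trans finSumFinEquiv.symm))
          (Equiv.sumCongr (Equiv.refl (Fin k))
            ((finCongr (by omega : n - 1 = (n - 2) + 1)).trans finSumFinEquiv.symm)) := by
  have hm : n - 2 < n - 1 := by omega
  have h2 : n - 1 = (n - 2) + 1 := by omega
  set star : Fin k ⊕ Fin (n - 1) := Sum.inr ⟨n - 2, hm⟩ with hstar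
  -- entries of Ln
  have e11 : ∀ i j, Ln (Sum.inl i) (Sum.inl j)
      = (n : ℤ) * (if i = j then 1 else 0) + L i j := by
    intro i j; rw [hLn]
    simp only [Matrix.fromBlocks_apply₁₁, Matrix.add_apply, Matrix.smul_apply,
      Matrix.one_apply, smul_eq_mul, mul_ite, mul_one, mul_zero]
  have e12 : ∀ i b, Ln (Sum.inl i) (Sum.inr b) = -1 := by
    intro i b; rw [hLn]; simp
  have e21 : ∀ a j, Ln (Sum.inr a) (Sum.inl j) = -1 := by
    intro a j; rw [hLn]; simp
  have e22 : ∀ a b, Ln (Sum.inr a) (Sum.inr b)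
      = ((n : ℤ) + k) * (if a = b then 1 else 0) - 1 := by
    intro a b; rw [hLn]
    simp only [Matrix.fromBlocks_apply₂₂, Matrix.sub_apply, Matrix.smul_apply,
      Matrix.one_apply, Matrix.of_apply, smul_eq_mul, mul_ite, mul_one, mul_zero]
    split_ifs <;> push_cast <;> ring
  -- row sums of Ln are 1
  have hLrow : ∀ p, ∑ q, Ln p q = 1 := by
    intro p
    rcases p with i | a
    · rw [Fintype.sum_sum_type]
      simp only [e11, e12, mul_ite, mul_one, mul_zero, Finset.sum_add_distrib,
        Finset.sum_ite_eq, Finset.mem_univ, if_true, hrow i, Finset.sum_const,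
        Finset.card_univ, Fintype.card_fin, nsmul_eq_mul, mul_neg]
      push_cast [Nat.cast_sub (by omega : 1 ≤ n)]
      ring
    · rw [Fintype.sum_sum_type]
      simp only [e21, e22, mul_ite, mul_one, mul_zero, Finset.sum_sub_distrib,
        Finset.sum_ite_eq, Finset.mem_univ, if_true, Finset.sum_const,
        Finset.card_univ, Fintype.card_fin, nsmul_eq_mul, smul_eq_mul, mul_neg]
      push_cast [Nat.cast_sub (by omega : 1 ≤ n)]
      ring
  -- the equiv
  have he : ∀ a : Fin (n - 1), ((finCongr h2).trans finSumFinEquiv.symm) a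
      = if ha : (a : ℕ) < n - 2 then Sum.inl ⟨a, ha⟩ else Sum.inr 0 := by
    intro a
    by_cases ha : (a : ℕ) < n - 2
    · have hca : finCongr h2 a = Fin.castAdd 1 ⟨a, ha⟩ := by
        apply Fin.ext; simp
      rw [Equiv.trans_apply, hca, finSumFinEquiv_symm_apply_castAdd, dif_pos ha]
    · have hav : (a : ℕ) = n - 2 := by have := a.isLt; omega
      have hca : finCongr h2 a = Fin.natAdd (n - 2) 0 := by
        apply Fin.ext; simp [hav]
      rw [Equiv.trans_apply, hca, finSumFinEquiv_symm_apply_natAdd, dif_neg ha]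
  refine ⟨1 - Matrix.vecMulVec (ConeAux.uvec star) (ConeAux.wvec star),
    (1 + Matrix.vecMulVec (ConeAux.uvec star) (ConeAux.wvec star)) *
      (1 + Matrix.vecMulVec (ConeAux.wvec star) (ConeAux.uvec star)), ?_, ?_, ?_⟩
  · rw [ConeAux.det_one_sub_uw]; exact isUnit_one
  · rw [Matrix.det_mul, ConeAux.det_one_add_uw, ConeAux.det_one_add_wu, mul_one]
    exact isUnit_one
  · rw [ConeAux.entry_formula Ln star hLrow]
    have uvl : ∀ i : Fin k, ConeAux.uvec (Sum.inr ⟨n - 2, hm⟩ : Fin k ⊕ Fin (n - 1)) (Sum.inl i) = 1 := by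
      intro i; simp [ConeAux.uvec, hstar]
    have wvl : ∀ i : Fin k, ConeAux.wvec (Sum.inr ⟨n - 2, hm⟩ : Fin k ⊕ Fin (n - 1)) (Sum.inl i) = 0 := by
      intro i; simp [ConeAux.wvec, hstar]
    have uvr : ∀ b : Fin (n - 1), ConeAux.uvec (Sum.inr ⟨n - 2, hm⟩ : Fin k ⊕ Fin (n - 1)) (Sum.inr b)
        = if b = ⟨n - 2, hm⟩ then 0 else 1 := by
      intro b; simp [ConeAux.uvec, hstar]
    have wvr : ∀ b : Fin (n - 1), ConeAux.wvec (Sum.inr ⟨n - 2, hm⟩ : Fin k ⊕ Fin (n - 1)) (Sum.inr b)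
        = if b = ⟨n - 2, hm⟩ then 1 else 0 := by
      intro b; simp [ConeAux.wvec, hstar]
    ext r c
    have hNE : ∀ (x : Fin k) (y : Fin (n-1)), (Sum.inl x : Fin k ⊕ Fin (n-1)) ≠ Sum.inr y :=
      fun x y h => by simp at h
    rcases r with i | a <;> rcases c with j | b
    · -- (inl, inl)
      simp only [Matrix.of_apply, e11, e12, e21, e22, uvl, wvl, uvr, wvr, hstar,
        Matrix.submatrix_apply, Equiv.sumCongr_apply, Sum.map_inl, Equiv.refl_apply, id_eq,
        Matrix.fromBlocks_apply₁₁, Matrix.add_apply, Matrix.smul_apply, Matrix.one_apply,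
        Matrix.of_apply, smul_eq_mul, eq_self_iff_true, if_true]
      ring
    · -- (inl, inr b)
      simp only [Matrix.of_apply, e11, e12, e21, e22, uvl, wvl, uvr, wvr, hstar,
        Matrix.submatrix_apply, Equiv.sumCongr_apply, Sum.map_inl, Sum.map_inr,
        Equiv.refl_apply, id_eq, Matrix.fromBlocks_apply₁₂, Matrix.zero_apply,
        eq_self_iff_true, if_true]
      by_cases hb : b = ⟨n - 2, hm⟩
      · simp only [hb, eq_self_iff_true, if_true]; ring
      · simp only [if_neg hb, if_neg (Ne.symm hb)]; ring
    · -- (inr a, inl j)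
      simp only [Matrix.of_apply, e11, e12, e21, e22, uvl, wvl, uvr, wvr, hstar,
        Matrix.submatrix_apply, Equiv.sumCongr_apply, Sum.map_inl, Sum.map_inr,
        Equiv.refl_apply, id_eq, Matrix.fromBlocks_apply₂₁, Matrix.zero_apply,
        eq_self_iff_true, if_true]
      by_cases ha : a = ⟨n - 2, hm⟩
      · simp only [ha, eq_self_iff_true, if_true]; ring
      · simp only [if_neg ha, if_neg (Ne.symm ha)]; ring
    · -- (inr a, inr b)
      simp only [Matrix.of_apply, e11, e12, e21, e22, uvl, wvl, uvr, wvr, hstar,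
        Matrix.submatrix_apply, Equiv.sumCongr_apply, Sum.map_inr, Equiv.refl_apply, id_eq,
        Matrix.fromBlocks_apply₂₂, eq_self_iff_true, if_true]
      rw [he a, he b]
      by_cases ha : a = ⟨n - 2, hm⟩ <;> by_cases hb : b = ⟨n - 2, hm⟩
      · have hav : ¬ ((a : ℕ) < n - 2) := by subst ha; simp
        have hbv : ¬ ((b : ℕ) < n - 2) := by subst hb; simp
        rw [dif_neg hav, dif_neg hbv]
        simp only [Matrix.fromBlocks_apply₂₂, Matrix.one_apply_eq, ha, hb,
          eq_self_iff_true, if_true]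
        ring
      · have hav : ¬ ((a : ℕ) < n - 2) := by subst ha; simp
        have hbv : (b : ℕ) < n - 2 := by
          have h1 := b.isLt
          have h3 : (b : ℕ) ≠ n - 2 := fun h => hb (Fin.ext h)
          omega
        rw [dif_neg hav, dif_pos hbv]
        simp only [Matrix.fromBlocks_apply₂₁, Matrix.zero_apply, ha, if_neg hb,
          if_neg (Ne.symm hb), eq_self_iff_true, if_true]
        ring
      · have hav : (a : ℕ) < n - 2 := by
          have h1 := a.isLt
          have h3 : (a : ℕ) ≠ n - 2 := fun h => ha (Fin.ext h)
          omega
        have hbv : ¬ ((b : ℕ) < n - 2) := by subst hb; simp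
        rw [dif_pos hav, dif_neg hbv]
        simp only [Matrix.fromBlocks_apply₁₂, Matrix.zero_apply, hb, if_neg ha,
          if_neg (Ne.symm ha), eq_self_iff_true, if_true]
        ring
      · have hav : (a : ℕ) < n - 2 := by
          have h1 := a.isLt
          have h3 : (a : ℕ) ≠ n - 2 := fun h => ha (Fin.ext h)
          omega
        have hbv : (b : ℕ) < n - 2 := by
          have h1 := b.isLt
          have h3 : (b : ℕ) ≠ n - 2 := fun h => hb (Fin.ext h)
          omega
        rw [dif_pos hav, dif_pos hbv]
        simp only [Matrix.fromBlocks_apply₁₁, Matrix.smul_apply, Matrix.one_apply,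
          smul_eq_mul, if_neg ha, if_neg hb, if_neg (Ne.symm ha), if_neg (Ne.symm hb)]
        by_cases hh : a = b
        · have hh2 : (⟨(a : ℕ), hav⟩ : Fin (n - 2)) = ⟨(b : ℕ), hbv⟩ :=
            Fin.ext (by simpa using Fin.ext_iff.mp hh)
          rw [if_pos hh, if_pos hh2]
          push_cast; ring
        · have hh2 : (⟨(a : ℕ), hav⟩ : Fin (n - 2)) ≠ ⟨(b : ℕ), hbv⟩ :=
            fun h => hh (Fin.ext (by simpa using Fin.ext_iff.mp h))
          rw [if_neg hh, if_neg hh2]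
          push_cast; ring
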